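/- Let μ ∈ (0,1) and s ∈ (0, μ), and define r : [0, ∞) → ℝ by r(τ) = √(s² − 2τ·s·√(μ² − s²) + μ²τ²). Then for all τ ≥ 0: r(τ)² ≥ s⁴/μ² (in particular r(τ) > 0), r is differentiable with r(τ)·r'(τ) = μ²τ − s·√(μ² − s²), and hence (r(τ)·r'(τ))² = μ²·(r(τ)² − s⁴/μ²), i.e., |r'(τ)| = (μ/r(τ))·√(r(τ)² − s⁴/μ²). -/

import Mathlib

/-- For `μ ∈ (0,1)`, `s ∈ (0,μ)` and
`r(τ) = √(s² − 2τs√(μ² − s²) + μ²τ²)`: for all `τ ≥ 0`, `r(τ)² ≥ s⁴/μ²`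
(in particular `r(τ) > 0`), `r` is differentiable with
`r(τ)·r'(τ) = μ²τ − s√(μ² − s²)`, hence `(r(τ)·r'(τ))² = μ²(r(τ)² − s⁴/μ²)`, i.e.
`|r'(τ)| = (μ/r(τ))·√(r(τ)² − s⁴/μ²)`. -/
theorem stmt_11 (μ s : ℝ) (hμ : μ ∈ Set.Ioo (0 : ℝ) 1) (hs : s ∈ Set.Ioo 0 μ)
    (r : ℝ → ℝ)
    (hr : ∀ τ : ℝ, r τ =
      Real.sqrt (s ^ 2 - 2 * τ * s * Real.sqrt (μ ^ 2 - s ^ 2) + μ ^ 2 * τ ^ 2)) :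
    ∀ τ : ℝ, 0 ≤ τ →
      s ^ 4 / μ ^ 2 ≤ (r τ) ^ 2 ∧ 0 < r τ ∧
      DifferentiableAt ℝ r τ ∧
      r τ * deriv r τ = μ ^ 2 * τ - s * Real.sqrt (μ ^ 2 - s ^ 2) ∧
      (r τ * deriv r τ) ^ 2 = μ ^ 2 * ((r τ) ^ 2 - s ^ 4 / μ ^ 2) ∧
      |deriv r τ| = μ / r τ * Real.sqrt ((r τ) ^ 2 - s ^ 4 / μ ^ 2) := by
  obtain ⟨hμ0, hμ1⟩ := hμ
  obtain ⟨hs0, hsμ⟩ := hs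
  set c := Real.sqrt (μ ^ 2 - s ^ 2) with hc
  have hμs : (0:ℝ) ≤ μ ^ 2 - s ^ 2 := by nlinarith
  have hc2 : c ^ 2 = μ ^ 2 - s ^ 2 := Real.sq_sqrt hμs
  set Q : ℝ → ℝ := fun x => s ^ 2 - 2 * s * c * x + μ ^ 2 * x ^ 2 with hQ
  have hkey : ∀ τ : ℝ, μ ^ 2 * Q τ = (μ ^ 2 * τ - s * c) ^ 2 + s ^ 4 := by
    intro τ; simp only [hQ]; nlinarith [hc2]
  have hQpos : ∀ τ : ℝ, 0 < Q τ := by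
    intro τ
    have := hkey τ
    nlinarith [sq_nonneg (μ ^ 2 * τ - s * c), pow_pos hs0 4, mul_pos hμ0 hμ0]
  intro τ _
  have hrQ : ∀ x : ℝ, r x = Real.sqrt (Q x) := by
    intro x; rw [hr x]; congr 1; simp only [hQ]; ring
  have hrτ : r τ = Real.sqrt (Q τ) := hrQ τ
  have hr2 : (r τ) ^ 2 = Q τ := by rw [hrτ]; exact Real.sq_sqrt (hQpos τ).le
  have hrpos : 0 < r τ := by rw [hrτ]; exact Real.sqrt_pos.2 (hQpos τ)
  have hge : s ^ 4 / μ ^ 2 ≤ (r τ) ^ 2 := by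
    rw [hr2, div_le_iff₀ (by positivity)]
    nlinarith [hkey τ, sq_nonneg (μ ^ 2 * τ - s * c)]
  have h0 : HasDerivAt (fun x : ℝ => 2 * s * c * x) (2 * s * c) τ := by
    simpa using (hasDerivAt_id τ).const_mul (2 * s * c)
  have h2 : HasDerivAt (fun x : ℝ => μ ^ 2 * x ^ 2) (μ ^ 2 * (2 * τ)) τ := by
    simpa using (hasDerivAt_pow 2 τ).const_mul (μ ^ 2)
  have hQd : HasDerivAt Q (-(2 * s * c) + μ ^ 2 * (2 * τ)) τ := by
    have := ((hasDerivAt_const τ (s ^ 2)).sub h0).add h2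
    have e : ∀ x, Q x = ((((fun x => s ^ 2) - fun x => 2 * s * c * x) + fun x => μ ^ 2 * x ^ 2 : ℝ → ℝ) x) := by
      intro x; simp only [hQ, Pi.add_apply, Pi.sub_apply]
    exact (this.congr_of_eventuallyEq (Filter.Eventually.of_forall e)).congr_deriv (by ring)
  have hrd : HasDerivAt r ((-(2 * s * c) + μ ^ 2 * (2 * τ)) / (2 * Real.sqrt (Q τ))) τ := by
    have := hQd.sqrt (ne_of_gt (hQpos τ))
    exact this.congr_of_eventuallyEq (by filter_upwards with x; rw [hrQ x])
  have hdiff : DifferentiableAt ℝ r τ := hrd.differentiableAt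
  have hderiv : deriv r τ = (-(2 * s * c) + μ ^ 2 * (2 * τ)) / (2 * Real.sqrt (Q τ)) :=
    hrd.deriv
  have hsqrt_ne : Real.sqrt (Q τ) ≠ 0 := ne_of_gt (by rw [← hrτ]; exact hrpos)
  have hprod : r τ * deriv r τ = μ ^ 2 * τ - s * c := by
    rw [hderiv, hrτ]
    field_simp
    ring
  have hsq : (r τ * deriv r τ) ^ 2 = μ ^ 2 * ((r τ) ^ 2 - s ^ 4 / μ ^ 2) := by
    rw [hprod, hr2]
    have hμ2 : μ ^ 2 ≠ 0 := by positivity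
    field_simp
    nlinarith [hkey τ]
  refine ⟨hge, hrpos, hdiff, hprod, hsq, ?_⟩
  have hnn : 0 ≤ (r τ) ^ 2 - s ^ 4 / μ ^ 2 := by linarith
  have habs : r τ * |deriv r τ| = μ * Real.sqrt ((r τ) ^ 2 - s ^ 4 / μ ^ 2) := by
    have h1 : |r τ * deriv r τ| = Real.sqrt ((r τ * deriv r τ) ^ 2) := by
      rw [Real.sqrt_sq_eq_abs]
    have h2' : |r τ * deriv r τ| = μ * Real.sqrt ((r τ) ^ 2 - s ^ 4 / μ ^ 2) := by
      rw [h1, hsq, Real.sqrt_mul (by positivity), Real.sqrt_sq hμ0.le]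
    rwa [abs_mul, abs_of_pos hrpos] at h2'
  rw [div_mul_eq_mul_div, eq_div_iff hrpos.ne', mul_comm]
  exact habs
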